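/- Let g be a growth function for which there is a strictly increasing sequence of positive integers {m_k} with liminf_k g(m_k+1/2)/g(m_k) > 1 and liminf_k g(m_k+1)/g(m_k+1/2) > 1. Then there exists a growth function f with f(x) > g(x) for all x ≥ 1 and a strictly increasing sequence A of positive integers with a_k ~ f(k), such that no strictly increasing sequence B of positive integers with b_n ~ g(n) contains A as a subsequence. -/

import Mathlib

/-- A growth function: positive, strictly increasing, continuous and unbounded on `[1,∞)`. -/
def IsGrowthFun (f : ℝ → ℝ) : Prop :=
  (∀ x ≥ (1 : ℝ), 0 < f x) ∧ StrictMonoOn f (Set.Ici 1) ∧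
    ContinuousOn f (Set.Ici 1) ∧ Filter.Tendsto f Filter.atTop Filter.atTop

open Filter Set Topology


noncomputable def interpL (A : ℕ → ℕ) (n : ℕ) (x : ℝ) : ℝ :=
  (A n : ℝ) + (x - n) * ((A (n+1) : ℝ) - (A n : ℝ))

noncomputable def interp (A : ℕ → ℕ) (x : ℝ) : ℝ :=
  interpL A ⌊x⌋₊ x

lemma interpL_continuous (A : ℕ → ℕ) (n : ℕ) : Continuous (interpL A n) := by
  unfold interpL; fun_prop

lemma interp_eqOn (A : ℕ → ℕ) (n : ℕ) {x : ℝ} (h1 : (n : ℝ) ≤ x) (h2 : x ≤ n + 1) :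
    interp A x = interpL A n x := by
  rcases eq_or_lt_of_le h2 with h | h
  · have hx : x = ((n+1 : ℕ) : ℝ) := by push_cast; linarith
    rw [hx]
    unfold interp interpL
    rw [Nat.floor_natCast]
    push_cast
    ring
  · have h0 : (0:ℝ) ≤ x := le_trans (by positivity) h1
    have hfl : ⌊x⌋₊ = n := by
      rw [Nat.floor_eq_iff h0]
      exact ⟨h1, h⟩
    unfold interp
    rw [hfl]

lemma interp_natCast (A : ℕ → ℕ) (n : ℕ) : interp A (n : ℝ) = A n := by
  unfold interp interpL
  rw [Nat.floor_natCast]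
  ring

lemma le_interp (A : ℕ → ℕ) (hA : Monotone A) {x : ℝ} (hx : 0 ≤ x) :
    (A ⌊x⌋₊ : ℝ) ≤ interp A x := by
  have h1 : (⌊x⌋₊ : ℝ) ≤ x := Nat.floor_le hx
  have h2 : (A ⌊x⌋₊ : ℝ) ≤ A (⌊x⌋₊ + 1) := by exact_mod_cast hA (Nat.le_succ _)
  unfold interp interpL
  nlinarith

lemma interp_lt (A : ℕ → ℕ) (hA : StrictMono A) {x : ℝ} (hx : 0 ≤ x) :
    interp A x < A (⌊x⌋₊ + 1) := by
  have h1 : x < ⌊x⌋₊ + 1 := Nat.lt_floor_add_one x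
  have h2 : (A ⌊x⌋₊ : ℝ) < A (⌊x⌋₊ + 1) := by exact_mod_cast hA (Nat.lt_succ_self _)
  have h0 : (⌊x⌋₊ : ℝ) ≤ x := Nat.floor_le hx
  unfold interp interpL
  nlinarith [mul_pos (by linarith : (0:ℝ) < (⌊x⌋₊:ℝ) + 1 - x)
    (by linarith : (0:ℝ) < (A (⌊x⌋₊+1) : ℝ) - (A ⌊x⌋₊ : ℝ))]

lemma interp_strictMonoOn (A : ℕ → ℕ) (hA : StrictMono A) :
    StrictMonoOn (interp A) (Set.Ici 0) := by
  intro x hx y hy hxy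
  rcases eq_or_lt_of_le (Nat.floor_le_floor hxy.le : ⌊x⌋₊ ≤ ⌊y⌋₊) with hf | hf
  · have h2 : (A ⌊x⌋₊ : ℝ) < A (⌊x⌋₊ + 1) := by exact_mod_cast hA (Nat.lt_succ_self _)
    unfold interp interpL
    rw [← hf]
    have := mul_lt_mul_of_pos_right (sub_lt_sub_right hxy (⌊x⌋₊:ℝ))
      (by linarith : (0:ℝ) < (A (⌊x⌋₊+1) : ℝ) - (A ⌊x⌋₊ : ℝ))
    linarith
  · calc interp A x < A (⌊x⌋₊ + 1) := interp_lt A hA hx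
      _ ≤ (A ⌊y⌋₊ : ℝ) := by exact_mod_cast hA.monotone (Nat.succ_le_of_lt hf)
      _ ≤ interp A y := le_interp A hA.monotone hy

lemma interp_le_one (A : ℕ → ℕ) {x : ℝ} (hx : x ≤ 1) : interp A x = interpL A 0 x := by
  rcases lt_or_eq_of_le hx with h | h
  · have hfl : ⌊x⌋₊ = 0 := Nat.floor_eq_zero.mpr h
    unfold interp
    rw [hfl]
  · rw [h]
    have h1 : interp A (1:ℝ) = A 1 := by exact_mod_cast interp_natCast A 1
    rw [h1]
    unfold interpL
    push_cast
    ring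

lemma interp_continuous (A : ℕ → ℕ) : Continuous (interp A) := by
  rw [continuous_iff_continuousAt]
  intro x
  by_cases hx1 : x < 1
  · exact (interpL_continuous A 0).continuousAt.congr
      (eventually_of_mem (Iio_mem_nhds hx1) fun y hy => (interp_le_one A (le_of_lt hy)).symm)
  push_neg at hx1
  have h0 : (0:ℝ) ≤ x := by linarith
  have hnx : (⌊x⌋₊ : ℝ) ≤ x := Nat.floor_le h0
  have hxn1 : x < (⌊x⌋₊ : ℝ) + 1 := Nat.lt_floor_add_one x
  have hn1 : 1 ≤ ⌊x⌋₊ := Nat.le_floor (by exact_mod_cast hx1)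
  by_cases hxe : (⌊x⌋₊ : ℝ) < x
  · exact (interpL_continuous A ⌊x⌋₊).continuousAt.congr
      (eventually_of_mem (Ioo_mem_nhds hxe hxn1)
        fun y hy => (interp_eqOn A ⌊x⌋₊ hy.1.le hy.2.le).symm)
  · have hxeq : x = (⌊x⌋₊ : ℝ) := le_antisymm (not_lt.mp hxe) hnx
    have hr : ContinuousWithinAt (interp A) (Ici x) x := by
      apply ((interpL_continuous A ⌊x⌋₊).continuousWithinAt).congr_of_eventuallyEq
      · filter_upwards [self_mem_nhdsWithin,
          mem_nhdsWithin_of_mem_nhds (Iio_mem_nhds hxn1)] with y hy1 hy2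
        exact interp_eqOn A ⌊x⌋₊ (by rw [← hxeq]; exact hy1) (le_of_lt hy2)
      · exact interp_eqOn A ⌊x⌋₊ hnx hxn1.le
    have hl : ContinuousWithinAt (interp A) (Iic x) x := by
      obtain ⟨p, hp⟩ : ∃ p, ⌊x⌋₊ = p + 1 := ⟨⌊x⌋₊ - 1, (Nat.succ_pred_eq_of_pos hn1).symm⟩
      have hxp : x = (p:ℝ) + 1 := by rw [hxeq, hp]; push_cast; ring
      apply ((interpL_continuous A p).continuousWithinAt).congr_of_eventuallyEq
      · filter_upwards [self_mem_nhdsWithin,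
          mem_nhdsWithin_of_mem_nhds (Ioi_mem_nhds (by rw [hxp]; linarith : (p:ℝ) < x))]
          with y hy1 hy2
        exact interp_eqOn A p (le_of_lt hy2) (by rw [← hxp]; exact hy1)
      · exact interp_eqOn A p (by rw [hxp]; linarith) (le_of_eq hxp)
    have := hl.union hr
    rwa [Iic_union_Ici, continuousWithinAt_univ] at this

lemma interp_tendsto (A : ℕ → ℕ) (hA : StrictMono A) :
    Tendsto (interp A) atTop atTop := by
  refine tendsto_atTop_mono' atTop ?_ (tendsto_atTop_add_const_right atTop (-1) tendsto_id)
  filter_upwards [eventually_ge_atTop (0:ℝ)] with x hx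
  have h1 := le_interp A hA.monotone hx
  have h2 : (⌊x⌋₊ : ℝ) ≤ (A ⌊x⌋₊ : ℝ) := by exact_mod_cast hA.le_apply
  have h3 : x < (⌊x⌋₊ : ℝ) + 1 := Nat.lt_floor_add_one x
  simp only [id_eq]
  linarith

/-- If `g` is a growth function with jumps along a strictly increasing sequence of
positive integers `m_k`, then there is a growth function `f > g` and a strictly
increasing sequence `A ~ f` of positive integers with no supersequence `B ~ g`. -/
theorem stmt16 (g : ℝ → ℝ) (hg : IsGrowthFun g)
    (m : ℕ → ℕ) (hm : StrictMono m) (hmpos : ∀ k, 0 < m k)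
    (hm1 : 1 < Filter.liminf
      (fun k : ℕ => g ((m k : ℝ) + 1 / 2) / g (m k)) Filter.atTop)
    (hm2 : 1 < Filter.liminf
      (fun k : ℕ => g ((m k : ℝ) + 1) / g ((m k : ℝ) + 1 / 2)) Filter.atTop) :
    ∃ f : ℝ → ℝ, IsGrowthFun f ∧ (∀ x ≥ (1 : ℝ), g x < f x) ∧
      ∃ a : ℕ → ℕ, StrictMono a ∧ (∀ k, 0 < a k) ∧
        Filter.Tendsto (fun k : ℕ => (a k : ℝ) / f k) Filter.atTop (nhds 1) ∧
        ¬ ∃ b : ℕ → ℕ, StrictMono b ∧ (∀ n, 0 < b n) ∧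
          Filter.Tendsto (fun n : ℕ => (b n : ℝ) / g n) Filter.atTop (nhds 1) ∧
          ∃ idx : ℕ → ℕ, StrictMono idx ∧ ∀ k, b (idx k) = a k := by
  obtain ⟨hgpos', hgsm, hgcont, hgtend⟩ := hg
  have hgpos : ∀ x : ℝ, 1 ≤ x → 0 < g x := fun x hx => hgpos' x hx
  have hgmono : ∀ x y : ℝ, 1 ≤ x → x ≤ y → g x ≤ g y := fun x y hx hxy =>
    hgsm.monotoneOn (Set.mem_Ici.mpr hx) (Set.mem_Ici.mpr (le_trans hx hxy)) hxy
  have hmk : ∀ k, k + 1 ≤ m k := by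
    intro k
    induction k with
    | zero => exact hmpos 0
    | succ n ih => exact Nat.succ_le_of_lt (lt_of_le_of_lt ih (hm (Nat.lt_succ_self n)))
  have hm1' : ∀ k, (1:ℝ) ≤ (m k : ℝ) := fun k => by exact_mod_cast hmpos k
  -- extract c and K from the liminf hypotheses
  set u1 : ℕ → ℝ := fun k => g ((m k : ℝ) + 1 / 2) / g (m k) with hu1
  set u2 : ℕ → ℝ := fun k => g ((m k : ℝ) + 1) / g ((m k : ℝ) + 1 / 2) with hu2
  have hb1 : IsBoundedUnder (· ≥ ·) atTop u1 :=
    isBoundedUnder_of ⟨0, fun k => div_nonneg (hgpos _ (by linarith [hm1' k])).le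
      (hgpos _ (hm1' k)).le⟩
  have hb2 : IsBoundedUnder (· ≥ ·) atTop u2 :=
    isBoundedUnder_of ⟨0, fun k => div_nonneg (hgpos _ (by linarith [hm1' k])).le
      (hgpos _ (by linarith [hm1' k])).le⟩
  set c : ℝ := (1 + min (liminf u1 atTop) (liminf u2 atTop)) / 2 with hc
  have hminlt : 1 < min (liminf u1 atTop) (liminf u2 atTop) := lt_min hm1 hm2
  have hc1 : 1 < c := by rw [hc]; linarith
  have hc0 : 0 < c := lt_trans one_pos hc1
  have hcu1 : ∀ᶠ k in atTop, c < u1 k :=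
    eventually_lt_of_lt_liminf (by have := min_le_left (liminf u1 atTop) (liminf u2 atTop); rw [hc]; linarith) hb1
  have hcu2 : ∀ᶠ k in atTop, c < u2 k :=
    eventually_lt_of_lt_liminf (by have := min_le_right (liminf u1 atTop) (liminf u2 atTop); rw [hc]; linarith) hb2
  obtain ⟨K, hK⟩ := (hcu1.and hcu2).exists_forall_of_atTop
  -- the sequences
  set G : ℕ → ℝ := fun k => g ((m k : ℝ) + 1/2) with hGdef
  have hGpos : ∀ k, 0 < G k := by
    intro k
    show 0 < g ((m k : ℝ) + 1/2)
    exact hgpos _ (by have := hm1' k; linarith)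
  set a : ℕ → ℕ := fun k => ⌈G k⌉₊ + k + 1 with hadef
  have hapos : ∀ k, 0 < a k := fun k => by simp [hadef]
  have hGmono : Monotone G := by
    intro i j hij
    show g ((m i : ℝ) + 1/2) ≤ g ((m j : ℝ) + 1/2)
    have hmm : (m i : ℝ) ≤ m j := by exact_mod_cast hm.monotone hij
    exact hgmono _ _ (by have := hm1' i; linarith) (by linarith)
  have hamono : StrictMono a := by
    apply strictMono_nat_of_lt_succ
    intro k
    have : ⌈G k⌉₊ ≤ ⌈G (k+1)⌉₊ := Nat.ceil_le_ceil (hGmono (Nat.le_succ k))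
    simp only [hadef]
    omega
  have hGa : ∀ k, G k ≤ (a k : ℝ) := by
    intro k
    have := Nat.le_ceil (G k)
    simp only [hadef]
    push_cast
    linarith
  have haG : ∀ k, (a k : ℝ) ≤ G k + ((k:ℝ) + 2) := by
    intro k
    have := (Nat.ceil_lt_add_one (hGpos k).le)
    simp only [hadef]
    push_cast
    linarith
  -- growth of G
  have hgrow : ∀ k, K ≤ k → c * G k ≤ G (k + 1) := by
    intro k hk
    have h1 : c < u2 k := (hK k hk).2
    have h2 : c * G k ≤ g ((m k : ℝ) + 1) := by
      rw [hu2] at h1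
      exact (le_div_iff₀ (hGpos k)).mp h1.le
    have h3 : g ((m k : ℝ) + 1) ≤ G (k+1) := by
      show g ((m k : ℝ) + 1) ≤ g ((m (k+1) : ℝ) + 1/2)
      have hmm : (m k : ℝ) + 1 ≤ m (k+1) := by
        exact_mod_cast Nat.succ_le_of_lt (hm (Nat.lt_succ_self k))
      exact hgmono _ _ (by have := hm1' k; linarith) (by linarith)
    linarith
  have hgeom : ∀ j : ℕ, c ^ j * G K ≤ G (K + j) := by
    intro j
    induction j with
    | zero => simp
    | succ i ih =>
      have h1 := hgrow (K + i) (Nat.le_add_right _ _)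
      calc c ^ (i+1) * G K = c * (c ^ i * G K) := by ring
        _ ≤ c * G (K + i) := by nlinarith
        _ ≤ G (K + i + 1) := h1
  -- (k+2)/G k → 0
  have htend0 : Tendsto (fun k : ℕ => ((k:ℝ) + 2) / G k) atTop (𝓝 0) := by
    rw [← tendsto_add_atTop_iff_nat K]
    have hr : ‖(c⁻¹ : ℝ)‖ < 1 := by
      rw [Real.norm_eq_abs, abs_of_pos (by positivity)]
      exact inv_lt_one_of_one_lt₀ hc1
    have t1 : Tendsto (fun n : ℕ => (n:ℝ) * c⁻¹ ^ n) atTop (𝓝 0) := by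
      have := (summable_pow_mul_geometric_of_norm_lt_one 1 hr).tendsto_atTop_zero
      simpa using this
    have t2 : Tendsto (fun n : ℕ => (c⁻¹:ℝ) ^ n) atTop (𝓝 0) :=
      tendsto_pow_atTop_nhds_zero_of_norm_lt_one hr
    have t3 : Tendsto (fun j : ℕ => ((j:ℝ) * c⁻¹ ^ j + ((K:ℝ) + 2) * c⁻¹ ^ j) / G K)
        atTop (𝓝 0) := by
      have := (t1.add (t2.const_mul ((K:ℝ) + 2))).div_const (G K)
      simpa using this
    apply squeeze_zero' ?_ ?_ t3
    · filter_upwards with j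
      exact div_nonneg (by positivity) (hGpos _).le
    · filter_upwards with j
      have hGj : c ^ j * G K ≤ G (j + K) := by
        have := hgeom j
        rwa [Nat.add_comm K j] at this
      have hpow : (0:ℝ) < c ^ j := by positivity
      have h5 : ((j:ℝ) + K + 2) / G (j + K) ≤ ((j:ℝ) + K + 2) / (c ^ j * G K) := by
        apply div_le_div_of_nonneg_left (by positivity) (mul_pos hpow (hGpos K))
        linarith [hGpos (j + K)]
      have h6 : ((j:ℝ) + K + 2) / (c ^ j * G K)
          = ((j:ℝ) * c⁻¹ ^ j + ((K:ℝ) + 2) * c⁻¹ ^ j) / G K := by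
        rw [inv_pow]
        field_simp
        ring
      calc (((j + K : ℕ):ℝ) + 2) / G (j + K) = ((j:ℝ) + K + 2) / G (j + K) := by push_cast; ring_nf
        _ ≤ ((j:ℝ) + K + 2) / (c ^ j * G K) := h5
        _ = _ := h6
  -- a k / G k → 1
  have hafG : Tendsto (fun k : ℕ => (a k : ℝ) / G k) atTop (𝓝 1) := by
    have hub : ∀ k, (a k : ℝ) / G k ≤ (G k + ((k:ℝ)+2)) / G k := fun k =>
      (div_le_div_iff_of_pos_right (hGpos k)).mpr (haG k)
    have hlb : ∀ k, (1:ℝ) ≤ (a k : ℝ) / G k := fun k =>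
      (one_le_div (hGpos k)).mpr (hGa k)
    have hub' : Tendsto (fun k : ℕ => (G k + ((k:ℝ)+2)) / G k) atTop (𝓝 1) := by
      have : (fun k : ℕ => (G k + ((k:ℝ)+2)) / G k)
          = fun k : ℕ => 1 + ((k:ℝ)+2) / G k := by
        funext k
        rw [add_div, div_self (hGpos k).ne']
      rw [this]
      simpa using tendsto_const_nhds.add htend0
    exact tendsto_of_tendsto_of_tendsto_of_le_of_le tendsto_const_nhds hub' hlb hub
  refine ⟨interp a, ⟨?_, ?_, ?_, ?_⟩, ?_, a, hamono, hapos, ?_, ?_⟩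
  · -- positivity
    intro x hx
    have h1 := le_interp a hamono.monotone (by linarith : (0:ℝ) ≤ x)
    have h2 : (0:ℝ) < (a ⌊x⌋₊ : ℝ) := by exact_mod_cast hapos ⌊x⌋₊
    linarith
  · exact (interp_strictMonoOn a hamono).mono (fun y hy => Set.mem_Ici.mpr (le_trans zero_le_one hy))
  · exact (interp_continuous a).continuousOn
  · exact interp_tendsto a hamono
  · -- g < f
    intro x hx
    have h0 : (0:ℝ) ≤ x := by linarith
    have h1 : g x ≤ g ((⌊x⌋₊:ℝ) + 1) := hgmono _ _ hx (Nat.lt_floor_add_one x).le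
    have h2 : g ((⌊x⌋₊:ℝ) + 1) < G ⌊x⌋₊ := by
      show g ((⌊x⌋₊:ℝ) + 1) < g ((m ⌊x⌋₊ : ℝ) + 1/2)
      have hfl0 : (0:ℝ) ≤ (⌊x⌋₊:ℝ) := Nat.cast_nonneg _
      have hmm : (⌊x⌋₊:ℝ) + 1 ≤ (m ⌊x⌋₊ : ℝ) := by exact_mod_cast hmk ⌊x⌋₊
      exact hgsm (Set.mem_Ici.mpr (by linarith)) (Set.mem_Ici.mpr (by linarith)) (by linarith)
    have h3 := hGa ⌊x⌋₊
    have h4 := le_interp a hamono.monotone h0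
    linarith
  · -- a k / f k → 1
    have : (fun k : ℕ => (a k : ℝ) / interp a (k:ℝ)) = fun _ : ℕ => (1:ℝ) := by
      funext k
      rw [interp_natCast]
      exact div_self (by exact_mod_cast (hapos k).ne')
    rw [this]
    exact tendsto_const_nhds
  · -- no supersequence
    rintro ⟨b, hbmono, hbpos, hbg, idx, hidxmono, hidx⟩
    have h1 : Tendsto (fun k : ℕ => (a k : ℝ) / g (idx k)) atTop (𝓝 1) := by
      have := hbg.comp hidxmono.tendsto_atTop
      simp only [Function.comp_def] at this
      apply this.congr
      intro k
      rw [hidx]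
    have hinv : Tendsto (fun k : ℕ => G k / (a k : ℝ)) atTop (𝓝 1) := by
      have := hafG.inv₀ one_ne_zero
      simp only [inv_one] at this
      apply this.congr
      intro k
      rw [inv_div]
    have h2 : Tendsto (fun k : ℕ => G k / g (idx k)) atTop (𝓝 1) := by
      have h3 := h1.mul hinv
      rw [one_mul] at h3
      apply h3.congr
      intro k
      rw [div_mul_div_comm, mul_comm (g ((idx k : ℕ) : ℝ)) ((a k : ℝ)),
        mul_div_mul_left _ _ (by exact_mod_cast (hapos k).ne' : ((a k : ℕ):ℝ) ≠ 0)]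
    have hev : ∀ᶠ k in atTop, G k / g ((idx k : ℕ) : ℝ) ∈ Set.Ioo (c⁻¹) c :=
      h2.eventually (Ioo_mem_nhds (inv_lt_one_of_one_lt₀ hc1) hc1)
    obtain ⟨k, hk1, hk2, hk3⟩ :=
      ((eventually_ge_atTop K).and ((eventually_ge_atTop 1).and hev)).exists
    have hidxk : 1 ≤ idx k := le_trans hk2 hidxmono.le_apply
    have hidxk' : (1:ℝ) ≤ (idx k : ℝ) := by exact_mod_cast hidxk
    have hgidx : 0 < g (idx k) := hgpos _ hidxk'
    rcases le_or_gt (idx k) (m k) with hle | hlt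
    · have hgm : g (idx k) ≤ g (m k) := hgmono _ _ hidxk' (by exact_mod_cast hle)
      have hcm : c * g (m k) ≤ G k := by
        have h5 := (hK k hk1).1
        rw [hu1] at h5
        exact (le_div_iff₀ (hgpos _ (hm1' k))).mp h5.le
      have h6 : c ≤ G k / g (idx k) := by
        rw [le_div_iff₀ hgidx]
        nlinarith
      exact absurd hk3.2 (not_lt.mpr h6)
    · have hm1le : (m k : ℝ) + 1 ≤ (idx k : ℝ) := by exact_mod_cast hlt
      have h5 : c * G k ≤ g ((m k : ℝ) + 1) := by
        have h5 := (hK k hk1).2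
        rw [hu2] at h5
        exact (le_div_iff₀ (hGpos k)).mp h5.le
      have h6 : g ((m k : ℝ) + 1) ≤ g (idx k) :=
        hgmono _ _ (by have := hm1' k; linarith) hm1le
      have h7 : G k / g (idx k) ≤ c⁻¹ := by
        rw [div_le_iff₀ hgidx]
        have h8 : c⁻¹ * (c * G k) ≤ c⁻¹ * g (idx k) :=
          mul_le_mul_of_nonneg_left (by linarith) (by positivity)
        rw [← mul_assoc, inv_mul_cancel₀ hc0.ne', one_mul] at h8
        linarith
      exact absurd hk3.1 (not_lt.mpr h7)
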